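/- Let V be a finite-dimensional real inner product space and W a finite group generated by orthogonal reflections acting on V. Fix a point x ∈ V. Then the stabilizer W_x = {w ∈ W : w·x = x} is generated by the reflections in W that fix x, i.e., by the reflections r_H with x ∈ H. -/

import Mathlib

open scoped RealInnerProductSpace
open Module Submodule

/-- `g` is the orthogonal reflection in the hyperplane orthogonal to some nonzero vector `v`
(possibly an affine hyperplane through the fixed points of `g`); here, the linear case. -/
def IsOrthoReflection {V : Type*} [NormedAddCommGroup V] [InnerProductSpace ℝ V]
    (g : V ≃ₗᵢ[ℝ] V) : Prop :=
  ∃ v : V, v ≠ 0 ∧ ∀ w : V, g w = w - (2 * (inner ℝ v w : ℝ) / (inner ℝ v v : ℝ)) • v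


namespace SteinbergAux

variable {V : Type*} [NormedAddCommGroup V] [InnerProductSpace ℝ V]

noncomputable def rfL (α : V) : V →ₗ[ℝ] V where
  toFun w := w - (2 * ⟪α, w⟫) • α
  map_add' x y := by simp only [inner_add_right]; module
  map_smul' c x := by simp only [real_inner_smul_right, RingHom.id_apply]; module

lemma rfL_apply (α w : V) : rfL α w = w - (2 * ⟪α, w⟫) • α := rfl

lemma inner_self_of_unit {α : V} (h : ‖α‖ = 1) : ⟪α, α⟫ = 1 := by
  rw [real_inner_self_eq_norm_sq, h]; norm_num

lemma rfL_invol {α : V} (h : ‖α‖ = 1) (w : V) : rfL α (rfL α w) = w := by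
  simp only [rfL_apply, inner_sub_right, real_inner_smul_right, inner_self_of_unit h]
  module

lemma rfL_norm {α : V} (h : ‖α‖ = 1) (w : V) : ‖rfL α w‖ = ‖w‖ := by
  have h2 : ‖rfL α w‖ ^ 2 = ‖w‖ ^ 2 := by
    rw [rfL_apply, norm_sub_sq_real, real_inner_smul_right, norm_smul]
    simp only [h, mul_one, Real.norm_eq_abs, mul_pow, sq_abs]
    rw [real_inner_comm w α]
    ring
  calc ‖rfL α w‖ = √(‖rfL α w‖ ^ 2) := (Real.sqrt_sq (norm_nonneg _)).symm
    _ = √(‖w‖ ^ 2) := by rw [h2]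
    _ = ‖w‖ := Real.sqrt_sq (norm_nonneg _)

noncomputable def rf (α : V) (h : ‖α‖ = 1) : V ≃ₗᵢ[ℝ] V :=
  { (LinearEquiv.ofLinear (rfL α) (rfL α) (by ext w; simp [rfL_invol h]) (by ext w; simp [rfL_invol h]) : V ≃ₗ[ℝ] V) with
    norm_map' := rfL_norm h }

lemma rf_apply {α : V} (h : ‖α‖ = 1) (w : V) : rf α h w = w - (2 * ⟪α, w⟫) • α := rfl

-- ============ rf API ============

lemma rf_invol {α : V} (h : ‖α‖ = 1) (w : V) : rf α h (rf α h w) = w := rfL_invol h w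

lemma rf_mul_self {α : V} (h : ‖α‖ = 1) : rf α h * rf α h = 1 :=
  LinearIsometryEquiv.ext fun w => rf_invol h w

lemma rf_inv {α : V} (h : ‖α‖ = 1) : (rf α h)⁻¹ = rf α h := by
  rw [inv_eq_iff_mul_eq_one, rf_mul_self]

lemma rf_apply_self {α : V} (h : ‖α‖ = 1) : rf α h α = -α := by
  rw [rf_apply, inner_self_of_unit h]; module

lemma rf_fix {α : V} (h : ‖α‖ = 1) {w : V} (hw : ⟪α, w⟫ = 0) : rf α h w = w := by
  rw [rf_apply, hw]; module

lemma rf_fix_iff {α : V} (h : ‖α‖ = 1) {w : V} : rf α h w = w ↔ ⟪α, w⟫ = 0 := by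
  constructor
  · intro hw
    have h1 : ⟪α, rf α h w⟫ = -⟪α, w⟫ := by
      rw [rf_apply, inner_sub_right, real_inner_smul_right, inner_self_of_unit h]; ring
    rw [hw] at h1
    linarith
  · exact rf_fix h

lemma inner_rf_self {α : V} (h : ‖α‖ = 1) (w : V) : ⟪α, rf α h w⟫ = -⟪α, w⟫ := by
  rw [rf_apply, inner_sub_right, real_inner_smul_right, inner_self_of_unit h]; ring

lemma rf_conj (u : V ≃ₗᵢ[ℝ] V) {α : V} (h : ‖α‖ = 1) (h' : ‖u α‖ = 1) :
    u * rf α h * u⁻¹ = rf (u α) h' := by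
  refine LinearIsometryEquiv.ext fun w => ?_
  have h1 : ⟪α, u⁻¹ w⟫ = ⟪u α, w⟫ := by
    conv_rhs => rw [show w = u (u⁻¹ w) by simp]
    rw [LinearIsometryEquiv.inner_map_map]
  simp only [LinearIsometryEquiv.coe_mul, Function.comp_apply, rf_apply, h1,
    map_sub, map_smul]
  congr 1
  simp

lemma rf_eq_rf_iff {α β : V} (hα : ‖α‖ = 1) (hβ : ‖β‖ = 1) (h : rf α hα = rf β hβ) :
    α = β ∨ α = -β := by
  have h1 : rf β hβ α = rf α hα α := by rw [h]
  rw [rf_apply_self, rf_apply] at h1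
  have h3 : ⟪β,α⟫ • β = α := by
    have h2 : (2:ℝ) • (⟪β,α⟫ • β) = (2:ℝ) • α := by
      linear_combination (norm := module) -h1
    exact smul_right_injective V (by norm_num : (2:ℝ) ≠ 0) h2
  have h6 : |⟪β,α⟫| = 1 := by
    have h5 : ‖α‖ = ‖⟪β,α⟫ • β‖ := by rw [h3]
    rw [norm_smul, hβ, mul_one, Real.norm_eq_abs] at h5
    rw [← h5, hα]
  rcases (abs_eq (by norm_num : (0:ℝ) ≤ 1)).1 h6 with h7 | h7
  · left; rw [← h3, h7, one_smul]
  · right; rw [← h3, h7]; module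

lemma rf_neg {α : V} (h : ‖α‖ = 1) (h' : ‖-α‖ = 1) : rf (-α) h' = rf α h := by
  refine LinearIsometryEquiv.ext fun w => ?_
  rw [rf_apply, rf_apply, inner_neg_left]
  module

lemma isOrthoReflection_rf {α : V} (h : ‖α‖ = 1) : IsOrthoReflection (rf α h) := by
  refine ⟨α, fun h0 => by simp [h0] at h, fun w => ?_⟩
  rw [rf_apply h, inner_self_of_unit h]
  norm_num

lemma orthoReflection_exists_unit {g : V ≃ₗᵢ[ℝ] V} (hg : IsOrthoReflection g) :
    ∃ (α : V) (h : ‖α‖ = 1), g = rf α h := by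
  obtain ⟨v, hv, hform⟩ := hg
  have hnv : ‖v‖ ≠ 0 := fun h0 => hv (norm_eq_zero.1 h0)
  have hα : ‖(‖v‖⁻¹ • v)‖ = 1 := by
    rw [norm_smul, norm_inv, norm_norm, inv_mul_cancel₀ hnv]
  refine ⟨‖v‖⁻¹ • v, hα, LinearIsometryEquiv.ext fun w => ?_⟩
  rw [hform w, rf_apply hα, real_inner_smul_left, smul_smul]
  congr 1
  rw [real_inner_self_eq_norm_sq]
  field_simp

/-- The fixed subspace of an isometry. -/
def fixSpace (g : V ≃ₗᵢ[ℝ] V) : Submodule ℝ V where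
  carrier := {w | g w = w}
  add_mem' := by intro a b ha hb; simp only [Set.mem_setOf_eq, map_add] at *; rw [ha, hb]
  zero_mem' := by simp
  smul_mem' := by intro c a ha; simp only [Set.mem_setOf_eq, map_smul] at *; rw [ha]

lemma mem_fixSpace {g : V ≃ₗᵢ[ℝ] V} {w : V} : w ∈ fixSpace g ↔ g w = w := Iff.rfl

lemma fixSpace_eq_top_iff {g : V ≃ₗᵢ[ℝ] V} : fixSpace g = ⊤ ↔ g = 1 := by
  constructor
  · intro h
    refine LinearIsometryEquiv.ext fun w => ?_
    have : w ∈ fixSpace g := by rw [h]; trivial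
    simpa [mem_fixSpace] using this
  · intro h; subst h; ext w; simp [mem_fixSpace]

variable [FiniteDimensional ℝ V]

set_option linter.unusedSectionVars false

noncomputable local instance : DecidableEq V := Classical.decEq V

noncomputable local instance : DecidableEq (V ≃ₗᵢ[ℝ] V) := Classical.decEq _

lemma orth_fix_le_range (g : V ≃ₗᵢ[ℝ] V) :
    (fixSpace g)ᗮ ≤ LinearMap.range ((g.toLinearEquiv : V →ₗ[ℝ] V) - LinearMap.id) := by
  set A : V →ₗ[ℝ] V := (g.toLinearEquiv : V →ₗ[ℝ] V) - LinearMap.id with hA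
  have hker : LinearMap.ker A = fixSpace g := by
    ext w
    simp [hA, mem_fixSpace, LinearMap.mem_ker, sub_eq_zero]
  have hle : LinearMap.range A ≤ (fixSpace g)ᗮ := by
    rintro _ ⟨z, rfl⟩
    rw [Submodule.mem_orthogonal]
    intro u hu
    have hgu : g u = u := hu
    have : ⟪u, g z⟫ = ⟪u, z⟫ := by
      conv_lhs => rw [← hgu]
      rw [LinearIsometryEquiv.inner_map_map]
    simp [hA, inner_sub_right, this, LinearIsometryEquiv.coe_toLinearEquiv]
  have heq : LinearMap.range A = (fixSpace g)ᗮ := by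
    apply Submodule.eq_of_le_of_finrank_eq hle
    have h1 := LinearMap.finrank_range_add_finrank_ker A
    have h2 := Submodule.finrank_add_finrank_orthogonal (K := fixSpace g)
    rw [hker] at h1
    omega
  rw [heq]

/-- Scherk's step: if the root is orthogonal to the fixed space of `g`, composing with the
reflection strictly enlarges the fixed space. -/
lemma fixSpace_lt_of_orth {g : V ≃ₗᵢ[ℝ] V} {α : V} (h : ‖α‖ = 1)
    (horth : ∀ w ∈ fixSpace g, ⟪α, w⟫ = 0) :
    fixSpace g < fixSpace (rf α h * g) := by
  have hle : fixSpace g ≤ fixSpace (rf α h * g) := by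
    intro w hw
    have hgw : g w = w := hw
    rw [mem_fixSpace, LinearIsometryEquiv.coe_mul, Function.comp_apply, hgw,
      rf_fix h (horth w hw)]
  rw [SetLike.lt_iff_le_and_exists]
  refine ⟨hle, ?_⟩
  have hαorth : α ∈ (fixSpace g)ᗮ := by
    rw [Submodule.mem_orthogonal]
    intro u hu
    rw [real_inner_comm]
    exact horth u hu
  obtain ⟨y, hy⟩ := orth_fix_le_range g ((fixSpace g)ᗮ.neg_mem hαorth)
  have hgy : g y = y - α := by
    have : g y - y = -α := hy
    linear_combination (norm := module) this
  have hy2 : ⟪α, y⟫ = 1/2 := by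
    have hn : ‖g y‖ = ‖y‖ := g.norm_map y
    rw [hgy] at hn
    have hsq : ‖y - α‖^2 = ‖y‖^2 := by rw [hn]
    rw [norm_sub_sq_real, h] at hsq
    have : ⟪y, α⟫ = 1/2 := by nlinarith
    rw [real_inner_comm]; exact this
  refine ⟨y, ?_, ?_⟩
  · rw [mem_fixSpace, LinearIsometryEquiv.coe_mul, Function.comp_apply, hgy, rf_apply,
      inner_sub_right, hy2, inner_self_of_unit h]
    norm_num
  · rw [mem_fixSpace, hgy]
    intro hcon
    have : α = 0 := by
      have := sub_eq_iff_eq_add.1 hcon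
      linear_combination (norm := module) -hcon
    rw [this] at h; simp at h

/-- The set of unit roots of reflections lying in `W`. -/
def RootSet (W : Subgroup (V ≃ₗᵢ[ℝ] V)) : Set V :=
  {α | ∃ h : ‖α‖ = 1, rf α h ∈ W}

lemma rootSet_unit {W : Subgroup (V ≃ₗᵢ[ℝ] V)} {α : V} (h : α ∈ RootSet W) : ‖α‖ = 1 :=
  h.choose

lemma rootSet_rf_mem {W : Subgroup (V ≃ₗᵢ[ℝ] V)} {α : V} (h : α ∈ RootSet W)
    (hu : ‖α‖ = 1) : rf α hu ∈ W := h.choose_spec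

lemma rootSet_stable {W : Subgroup (V ≃ₗᵢ[ℝ] V)} {u : V ≃ₗᵢ[ℝ] V} (hu : u ∈ W)
    {α : V} (hα : α ∈ RootSet W) : u α ∈ RootSet W := by
  obtain ⟨h, hmem⟩ := hα
  have h' : ‖u α‖ = 1 := by rw [u.norm_map]; exact h
  refine ⟨h', ?_⟩
  rw [← rf_conj u h h']
  exact W.mul_mem (W.mul_mem hu hmem) (W.inv_mem hu)

lemma rootSet_neg {W : Subgroup (V ≃ₗᵢ[ℝ] V)} {α : V} (hα : α ∈ RootSet W) :
    -α ∈ RootSet W := by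
  obtain ⟨h, hmem⟩ := hα
  have h' : ‖-α‖ = 1 := by rw [norm_neg]; exact h
  exact ⟨h', by rw [rf_neg h h']; exact hmem⟩

lemma rootSet_finite {W : Subgroup (V ≃ₗᵢ[ℝ] V)} (hfin : (W : Set (V ≃ₗᵢ[ℝ] V)).Finite) :
    (RootSet W).Finite := by
  set F : (V ≃ₗᵢ[ℝ] V) → Set V := fun g => {α : V | ∃ h : ‖α‖ = 1, rf α h = g} with hF
  have hfib : ∀ g : V ≃ₗᵢ[ℝ] V, (F g).Finite := by
    intro g
    by_cases hne : ∃ (α₀ : V) (h₀ : ‖α₀‖ = 1), rf α₀ h₀ = g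
    · obtain ⟨α₀, h₀, hg⟩ := hne
      apply Set.Finite.subset ((Set.finite_singleton (-α₀)).insert α₀)
      rintro α ⟨h, hα⟩
      rcases rf_eq_rf_iff h h₀ (by rw [hα, hg]) with h1 | h1 <;> simp [h1]
    · have : F g = ∅ := by
        ext α; simp only [hF, Set.mem_setOf_eq, Set.mem_empty_iff_false, iff_false]
        intro ⟨h, hα⟩; exact hne ⟨α, h, hα⟩
      rw [this]; exact Set.finite_empty
  apply Set.Finite.subset (Set.Finite.biUnion hfin (fun g _ => hfib g))
  rintro α ⟨h, hmem⟩
  exact Set.mem_biUnion hmem (⟨h, rfl⟩ : α ∈ F (rf α h))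

/-- Nonnegative combinations of a finite set of vectors. -/
def InCone (T : Finset V) (v : V) : Prop :=
  ∃ m : V → ℝ, (∀ i, 0 ≤ m i) ∧ v = ∑ i ∈ T, m i • i

lemma inCone_mem {T : Finset V} {β : V} (hβ : β ∈ T) : InCone T β := by
  classical
  refine ⟨fun i => if i = β then 1 else 0, fun i => by positivity, ?_⟩
  rw [show (∑ i ∈ T, (if i = β then (1:ℝ) else 0) • i) = ∑ i ∈ T, (if i = β then i else 0) by
    apply Finset.sum_congr rfl; intro i _; split <;> simp]
  rw [Finset.sum_ite_eq' T β (fun i => i)]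
  simp [hβ]

lemma inCone_subst {T : Finset V} {β v : V} (hβT : β ∈ T) (hβ : InCone (T.erase β) β)
    (hv : InCone T v) : InCone (T.erase β) v := by
  obtain ⟨k, hk0, hkβ⟩ := hβ
  obtain ⟨m, hm0, hmv⟩ := hv
  refine ⟨fun i => m i + m β * k i, fun i => add_nonneg (hm0 i) (mul_nonneg (hm0 β) (hk0 i)), ?_⟩
  have h1 : ∑ i ∈ T.erase β, (m i + m β * k i) • i
      = ∑ i ∈ T.erase β, m i • i + m β • ∑ i ∈ T.erase β, k i • i := by
    rw [Finset.smul_sum, ← Finset.sum_add_distrib]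
    apply Finset.sum_congr rfl
    intro i _
    rw [add_smul, smul_smul]
  rw [h1, ← hkβ, hmv, ← Finset.sum_erase_add T _ hβT]

section Dev

variable {W : Subgroup (V ≃ₗᵢ[ℝ] V)} {q : V} {P : Finset V}

lemma sum_smul_inner (T : Finset V) (m : V → ℝ) (q : V) :
    ⟪∑ i ∈ T, m i • i, q⟫ = ∑ i ∈ T, m i * ⟪i, q⟫ := by
  rw [sum_inner]
  apply Finset.sum_congr rfl
  intro i _
  rw [real_inner_smul_left]

lemma zero_combo (hP : ∀ α, α ∈ P ↔ α ∈ RootSet W ∧ 0 < ⟪α, q⟫)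
    {T : Finset V} (hT : T ⊆ P) {m : V → ℝ} (hm0 : ∀ i, 0 ≤ m i)
    (h0 : ∑ i ∈ T, m i • i = 0) : ∀ i ∈ T, m i = 0 := by
  have h1 : ∑ i ∈ T, m i * ⟪i, q⟫ = 0 := by
    rw [← sum_smul_inner, h0, inner_zero_left]
  have h2 : ∀ i ∈ T, 0 ≤ m i * ⟪i, q⟫ := fun i hi =>
    mul_nonneg (hm0 i) (le_of_lt ((hP i).1 (hT hi)).2)
  intro i hi
  have h3 := (Finset.sum_eq_zero_iff_of_nonneg h2).1 h1 i hi
  have h4 : 0 < ⟪i, q⟫ := ((hP i).1 (hT hi)).2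
  rcases mul_eq_zero.1 h3 with h | h
  · exact h
  · exact absurd h (ne_of_gt h4)

/-- Key lemma (Humphreys 1.4 analogue): a "simple" reflection maps other positive roots to
positive roots. -/
lemma key_simple_pos (hP : ∀ α, α ∈ P ↔ α ∈ RootSet W ∧ 0 < ⟪α, q⟫)
    (hq : ∀ α ∈ RootSet W, ⟪α, q⟫ ≠ 0)
    {D : Finset V} (hD1 : D ⊆ P) (hD2 : ∀ β ∈ P, InCone D β)
    (hD3 : ∀ β ∈ D, ¬ InCone (D.erase β) β)
    {α : V} (hα : α ∈ D) (hαu : ‖α‖ = 1) {β : V} (hβ : β ∈ P) (hne : β ≠ α) :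
    rf α hαu β ∈ P := by
  have hαP : α ∈ P := hD1 hα
  have hαR : α ∈ RootSet W := ((hP α).1 hαP).1
  have hαq : 0 < ⟪α, q⟫ := ((hP α).1 hαP).2
  have hβR : β ∈ RootSet W := ((hP β).1 hβ).1
  have hβq : 0 < ⟪β, q⟫ := ((hP β).1 hβ).2
  have hβu : ‖β‖ = 1 := rootSet_unit hβR
  have hrfW : rf α hαu ∈ W := rootSet_rf_mem hαR hαu
  have hsR : rf α hαu β ∈ RootSet W := rootSet_stable hrfW hβR
  rcases lt_trichotomy 0 ⟪rf α hαu β, q⟫ with hpos | hzero | hneg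
  · exact (hP _).2 ⟨hsR, hpos⟩
  · exact absurd hzero.symm (hq _ hsR)
  · exfalso
    -- the negative case leads to a contradiction
    set c : ℝ := 2 * ⟪α, β⟫ with hc
    have hsform : rf α hαu β = β - c • α := rf_apply hαu β
    have hγR : -(rf α hαu β) ∈ RootSet W := rootSet_neg hsR
    have hγP : -(rf α hαu β) ∈ P := by
      refine (hP _).2 ⟨hγR, ?_⟩
      rw [inner_neg_left]
      linarith
    obtain ⟨m, hm0, hmγ⟩ := hD2 _ hγP
    obtain ⟨n, hn0, hnβ⟩ := hD2 β hβ
    have hsum : ∑ i ∈ D, (n i + m i) • i = c • α := by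
      have h1 : ∑ i ∈ D, (n i + m i) • i = ∑ i ∈ D, n i • i + ∑ i ∈ D, m i • i := by
        rw [← Finset.sum_add_distrib]
        exact Finset.sum_congr rfl fun i _ => add_smul _ _ _
      rw [h1, ← hnβ, ← hmγ, hsform]
      module
    set M : ℝ := n α + m α with hM
    have hEsum : ∑ i ∈ D.erase α, (n i + m i) • i + M • α = c • α := by
      rw [← hsum, ← Finset.sum_erase_add D _ hα]
    have hE : ∑ i ∈ D.erase α, (n i + m i) • i = (c - M) • α := by
      rw [sub_smul]
      linear_combination (norm := module) hEsum
    rcases le_or_gt c M with hcM | hMc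
    · -- c ≤ M : all coefficients vanish and β = α, contradiction
      have hEq : ∑ i ∈ D.erase α, (n i + m i) * ⟪i, q⟫ = (c - M) * ⟪α, q⟫ := by
        rw [← sum_smul_inner, hE, real_inner_smul_left]
      have hterm : ∀ i ∈ D.erase α, 0 ≤ (n i + m i) * ⟪i, q⟫ := by
        intro i hi
        have hiP : i ∈ P := hD1 (Finset.mem_of_mem_erase hi)
        exact mul_nonneg (add_nonneg (hn0 i) (hm0 i)) (le_of_lt ((hP i).1 hiP).2)
      have hle0 : (c - M) * ⟪α, q⟫ ≤ 0 :=
        mul_nonpos_of_nonpos_of_nonneg (by linarith) (le_of_lt hαq)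
      have hge0 : 0 ≤ ∑ i ∈ D.erase α, (n i + m i) * ⟪i, q⟫ := Finset.sum_nonneg hterm
      have hzero : ∑ i ∈ D.erase α, (n i + m i) * ⟪i, q⟫ = 0 := le_antisymm (by linarith [hEq]) hge0
      have hall : ∀ i ∈ D.erase α, (n i + m i) * ⟪i, q⟫ = 0 :=
        (Finset.sum_eq_zero_iff_of_nonneg hterm).1 hzero
      have hni : ∀ i ∈ D.erase α, n i = 0 := by
        intro i hi
        have hiq : 0 < ⟪i, q⟫ := ((hP i).1 (hD1 (Finset.mem_of_mem_erase hi))).2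
        have := hall i hi
        rcases mul_eq_zero.1 this with h | h
        · linarith [hn0 i, hm0 i]
        · exact absurd h (ne_of_gt hiq)
      have hβα : β = n α • α := by
        rw [hnβ, ← Finset.sum_erase_add D _ hα]
        rw [Finset.sum_eq_zero (fun i hi => by rw [hni i hi, zero_smul])]
        rw [zero_add]
      have hnα1 : n α = 1 := by
        have h1 : ‖β‖ = |n α| * ‖α‖ := by rw [hβα, norm_smul, Real.norm_eq_abs]
        rw [hβu, hαu, mul_one] at h1
        have h2 : |n α| = 1 := h1.symm
        rcases abs_eq (by norm_num : (0:ℝ) ≤ 1) |>.1 h2 with h | h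
        · exact h
        · linarith [hn0 α]
      exact hne (by rw [hβα, hnα1, one_smul])
    · -- M < c : α would be in the cone of the others, contradiction with minimality
      apply hD3 α hα
      refine ⟨fun i => (n i + m i) / (c - M), fun i =>
        div_nonneg (add_nonneg (hn0 i) (hm0 i)) (by linarith), ?_⟩
      have h1 : ∑ i ∈ D.erase α, ((n i + m i) / (c - M)) • i
          = (c - M)⁻¹ • ∑ i ∈ D.erase α, (n i + m i) • i := by
        rw [Finset.smul_sum]
        apply Finset.sum_congr rfl
        intro i _
        rw [smul_smul, div_eq_inv_mul]
      rw [h1, hE, smul_smul, inv_mul_cancel₀ (by linarith : c - M ≠ 0), one_smul]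

lemma rf_congr {α β : V} (h : α = β) (h1 : ‖α‖ = 1) (h2 : ‖β‖ = 1) : rf α h1 = rf β h2 := by
  subst h; rfl

/-- Generation: the reflection in any positive root lies in the subgroup generated by the
simple reflections. -/
lemma gen_aux (hP : ∀ α, α ∈ P ↔ α ∈ RootSet W ∧ 0 < ⟪α, q⟫)
    (hq : ∀ α ∈ RootSet W, ⟪α, q⟫ ≠ 0)
    {D : Finset V} (hD1 : D ⊆ P) (hD2 : ∀ β ∈ P, InCone D β)
    (hD3 : ∀ β ∈ D, ¬ InCone (D.erase β) β) :
    ∀ (n : ℕ) (β : V) (hβu : ‖β‖ = 1), β ∈ P →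
      (P.filter fun γ => ⟪γ, q⟫ < ⟪β, q⟫).card ≤ n →
      rf β hβu ∈ Subgroup.closure {h : V ≃ₗᵢ[ℝ] V | ∃ δ ∈ D, ∃ hδ : ‖δ‖ = 1, h = rf δ hδ} := by
  intro n
  induction n with
  | zero =>
    intro β hβu hβ hcard
    by_cases hβD : β ∈ D
    · exact Subgroup.subset_closure ⟨β, hβD, hβu, rfl⟩
    · exfalso
      obtain ⟨m, hm0, hmβ⟩ := hD2 β hβ
      have h1 : ∑ i ∈ D, m i * ⟪i, β⟫ = 1 := by
        rw [← sum_smul_inner, ← hmβ, inner_self_of_unit hβu]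
      have hδ : ∃ δ ∈ D, 0 < m δ * ⟪δ, β⟫ := by
        by_contra hcon
        push_neg at hcon
        have := Finset.sum_nonpos hcon
        linarith
      obtain ⟨δ, hδD, hδpos⟩ := hδ
      have hδP : δ ∈ P := hD1 hδD
      have hδu : ‖δ‖ = 1 := rootSet_unit ((hP δ).1 hδP).1
      have hδβ : 0 < ⟪δ, β⟫ := by
        rcases le_or_gt ⟪δ, β⟫ 0 with h | h
        · nlinarith [hm0 δ]
        · exact h
      have hβδ : β ≠ δ := fun h => hβD (h ▸ hδD)
      have hγ'P : rf δ hδu β ∈ P := key_simple_pos hP hq hD1 hD2 hD3 hδD hδu hβ hβδ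
      have hlt : ⟪rf δ hδu β, q⟫ < ⟪β, q⟫ := by
        rw [rf_apply, inner_sub_left, real_inner_smul_left]
        have h2 : 0 < ⟪δ, q⟫ := ((hP δ).1 hδP).2
        nlinarith
      have : rf δ hδu β ∈ P.filter fun γ => ⟪γ, q⟫ < ⟪β, q⟫ :=
        Finset.mem_filter.2 ⟨hγ'P, hlt⟩
      have := Finset.card_pos.2 ⟨_, this⟩
      omega
  | succ n ih =>
    intro β hβu hβ hcard
    by_cases hβD : β ∈ D
    · exact Subgroup.subset_closure ⟨β, hβD, hβu, rfl⟩
    · obtain ⟨m, hm0, hmβ⟩ := hD2 β hβ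
      have h1 : ∑ i ∈ D, m i * ⟪i, β⟫ = 1 := by
        rw [← sum_smul_inner, ← hmβ, inner_self_of_unit hβu]
      have hδ : ∃ δ ∈ D, 0 < m δ * ⟪δ, β⟫ := by
        by_contra hcon
        push_neg at hcon
        have := Finset.sum_nonpos hcon
        linarith
      obtain ⟨δ, hδD, hδpos⟩ := hδ
      have hδP : δ ∈ P := hD1 hδD
      have hδu : ‖δ‖ = 1 := rootSet_unit ((hP δ).1 hδP).1
      have hδβ : 0 < ⟪δ, β⟫ := by
        rcases le_or_gt ⟪δ, β⟫ 0 with h | h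
        · nlinarith [hm0 δ]
        · exact h
      have hβδ : β ≠ δ := fun h => hβD (h ▸ hδD)
      set γ' := rf δ hδu β with hγ'
      have hγ'P : γ' ∈ P := key_simple_pos hP hq hD1 hD2 hD3 hδD hδu hβ hβδ
      have hγ'u : ‖γ'‖ = 1 := rootSet_unit ((hP γ').1 hγ'P).1
      have hlt : ⟪γ', q⟫ < ⟪β, q⟫ := by
        rw [hγ', rf_apply, inner_sub_left, real_inner_smul_left]
        have h2 : 0 < ⟪δ, q⟫ := ((hP δ).1 hδP).2
        nlinarith
      have hss : (P.filter fun γ => ⟪γ, q⟫ < ⟪γ', q⟫) ⊂ (P.filter fun γ => ⟪γ, q⟫ < ⟪β, q⟫) := by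
        constructor
        · intro γ hγ
          rw [Finset.mem_filter] at hγ ⊢
          exact ⟨hγ.1, lt_trans hγ.2 hlt⟩
        · intro hcon
          have h3 : γ' ∈ P.filter fun γ => ⟪γ, q⟫ < ⟪β, q⟫ := Finset.mem_filter.2 ⟨hγ'P, hlt⟩
          have h4 := hcon h3
          rw [Finset.mem_filter] at h4
          exact lt_irrefl _ h4.2
      have hcard' : (P.filter fun γ => ⟪γ, q⟫ < ⟪γ', q⟫).card ≤ n := by
        have := Finset.card_lt_card hss
        omega
      have hγ'mem := ih γ' hγ'u hγ'P hcard'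
      have hδmem : rf δ hδu ∈ Subgroup.closure
          {h : V ≃ₗᵢ[ℝ] V | ∃ δ' ∈ D, ∃ hδ' : ‖δ'‖ = 1, h = rf δ' hδ'} :=
        Subgroup.subset_closure ⟨δ, hδD, hδu, rfl⟩
      have hkey : rf β hβu = rf δ hδu * rf γ' hγ'u * rf δ hδu := by
        have e1 : rf δ hδu γ' = β := rf_invol hδu β
        have hβu2 : ‖rf δ hδu γ'‖ = 1 := by rw [e1]; exact hβu
        have e2 : rf δ hδu * rf γ' hγ'u * (rf δ hδu)⁻¹ = rf (rf δ hδu γ') hβu2 :=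
          rf_conj (rf δ hδu) hγ'u hβu2
        rw [rf_inv hδu] at e2
        rw [e2]
        exact (rf_congr e1 hβu2 hβu).symm
      rw [hkey]
      exact Subgroup.mul_mem _ (Subgroup.mul_mem _ hδmem hγ'mem) hδmem

lemma simple_list_prod_mem (hP : ∀ α, α ∈ P ↔ α ∈ RootSet W ∧ 0 < ⟪α, q⟫)
    {D : Finset V} (hD1 : D ⊆ P)
    {l : List (V ≃ₗᵢ[ℝ] V)} (hl : ∀ h' ∈ l, ∃ δ ∈ D, ∃ hδ : ‖δ‖ = 1, h' = rf δ hδ) :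
    l.prod ∈ W := by
  apply list_prod_mem
  intro x hx
  obtain ⟨δ, hδD, hδu, rfl⟩ := hl x hx
  exact rootSet_rf_mem ((hP δ).1 (hD1 hδD)).1 hδu

/-- The sign-flip scanning lemma. -/
lemma flip_lemma (hP : ∀ α, α ∈ P ↔ α ∈ RootSet W ∧ 0 < ⟪α, q⟫)
    (hq : ∀ α ∈ RootSet W, ⟪α, q⟫ ≠ 0)
    {D : Finset V} (hD1 : D ⊆ P) (hD2 : ∀ β ∈ P, InCone D β)
    (hD3 : ∀ β ∈ D, ¬ InCone (D.erase β) β) :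
    ∀ (l : List (V ≃ₗᵢ[ℝ] V)), (∀ h' ∈ l, ∃ δ ∈ D, ∃ hδ : ‖δ‖ = 1, h' = rf δ hδ) →
      ∀ β, β ∈ P → ⟪l.prod β, q⟫ < 0 →
      ∃ (l₁ : List (V ≃ₗᵢ[ℝ] V)) (δ : V) (hδ : ‖δ‖ = 1) (l₂ : List (V ≃ₗᵢ[ℝ] V)),
        l = l₁ ++ (rf δ hδ) :: l₂ ∧ δ ∈ D ∧ l₂.prod β = δ := by
  intro l
  induction l with
  | nil =>
    intro _ β hβ hneg
    exfalso
    simp only [List.prod_nil, LinearIsometryEquiv.coe_one, id_eq] at hneg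
    exact absurd hneg (not_lt.2 (le_of_lt ((hP β).1 hβ).2))
  | cons a l ih =>
    intro hmem β hβ hneg
    obtain ⟨δ₀, hδ₀D, hδ₀u, ha⟩ := hmem a List.mem_cons_self
    have hmem' : ∀ h' ∈ l, ∃ δ ∈ D, ∃ hδ : ‖δ‖ = 1, h' = rf δ hδ :=
      fun h' hh' => hmem h' (List.mem_cons_of_mem a hh')
    have hprod : (a :: l).prod β = a (l.prod β) := by
      rw [List.prod_cons, LinearIsometryEquiv.coe_mul, Function.comp_apply]
    have hlW : l.prod ∈ W := simple_list_prod_mem hP hD1 hmem'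
    have hβ'R : l.prod β ∈ RootSet W := rootSet_stable hlW ((hP β).1 hβ).1
    rcases lt_trichotomy 0 ⟪l.prod β, q⟫ with hpos | hzero | hneg'
    · -- prefix reflection flips the sign: l.prod β must equal δ₀
      have hβ'P : l.prod β ∈ P := (hP _).2 ⟨hβ'R, hpos⟩
      by_cases heq : l.prod β = δ₀
      · exact ⟨[], δ₀, hδ₀u, l, by rw [ha]; rfl, hδ₀D, heq⟩
      · exfalso
        have := key_simple_pos hP hq hD1 hD2 hD3 hδ₀D hδ₀u hβ'P heq
        have hpos2 : 0 < ⟪rf δ₀ hδ₀u (l.prod β), q⟫ := ((hP _).1 this).2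
        rw [hprod, ha] at hneg
        linarith
    · exact absurd hzero.symm (hq _ hβ'R)
    · obtain ⟨l₁, δ, hδ, l₂, hsplit, hδD, hl₂⟩ := ih hmem' β hβ hneg'
      exact ⟨a :: l₁, δ, hδ, l₂, by rw [hsplit]; rfl, hδD, hl₂⟩

/-- A product of simple reflections preserving the positive system is trivial. -/
lemma prod_eq_one (hP : ∀ α, α ∈ P ↔ α ∈ RootSet W ∧ 0 < ⟪α, q⟫)
    (hq : ∀ α ∈ RootSet W, ⟪α, q⟫ ≠ 0)
    {D : Finset V} (hD1 : D ⊆ P) (hD2 : ∀ β ∈ P, InCone D β)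
    (hD3 : ∀ β ∈ D, ¬ InCone (D.erase β) β) :
    ∀ (n : ℕ) (l : List (V ≃ₗᵢ[ℝ] V)), l.length ≤ n →
      (∀ h' ∈ l, ∃ δ ∈ D, ∃ hδ : ‖δ‖ = 1, h' = rf δ hδ) →
      (∀ β ∈ P, 0 < ⟪l.prod β, q⟫) → l.prod = 1 := by
  intro n
  induction n with
  | zero =>
    intro l hlen _ _
    rw [List.length_eq_zero_iff.1 (Nat.le_zero.1 hlen)]
    rfl
  | succ n ih =>
    intro l hlen hmem hpos
    rcases List.eq_nil_or_concat l with rfl | ⟨L, a, rfl⟩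
    · rfl
    · obtain ⟨δ, hδD, hδu, ha⟩ := hmem a (by simp [List.concat_eq_append])
      have hmemL : ∀ h' ∈ L, ∃ δ' ∈ D, ∃ hδ' : ‖δ'‖ = 1, h' = rf δ' hδ' :=
        fun h' hh' => hmem h' (by simp [List.concat_eq_append, hh'])
      have hδP : δ ∈ P := hD1 hδD
      have hprodeq : (L.concat a).prod = L.prod * a := List.prod_concat
      have happly : (L.concat a).prod δ = -(L.prod δ) := by
        rw [hprodeq, LinearIsometryEquiv.coe_mul, Function.comp_apply, ha,
          rf_apply_self hδu, map_neg]
      have hLW : L.prod ∈ W := simple_list_prod_mem hP hD1 hmemL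
      have hLδR : L.prod δ ∈ RootSet W := rootSet_stable hLW ((hP δ).1 hδP).1
      rcases lt_trichotomy 0 ⟪L.prod δ, q⟫ with hp | hz | hn
      · exfalso
        have := hpos δ hδP
        rw [happly, inner_neg_left] at this
        linarith
      · exact absurd hz.symm (hq _ hLδR)
      · obtain ⟨l₁, djv, hdjv, l₂, hsplit, hdjvD, hl₂⟩ :=
          flip_lemma hP hq hD1 hD2 hD3 L hmemL δ hδP hn
        have hdju2 : ‖l₂.prod δ‖ = 1 := by rw [hl₂]; exact hdjv
        have hconj : rf djv hdjv = l₂.prod * rf δ hδu * (l₂.prod)⁻¹ := by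
          rw [rf_conj (l₂.prod) hδu hdju2]
          exact (rf_congr hl₂ hdju2 hdjv).symm
        have hkey : rf djv hdjv * l₂.prod * rf δ hδu = l₂.prod := by
          rw [hconj]
          group
          rw [show l₂.prod * rf δ hδu * rf δ hδu = l₂.prod * (rf δ hδu * rf δ hδu) by group,
            rf_mul_self hδu, mul_one]
        have hprod2 : (L.concat a).prod = (l₁ ++ l₂).prod := by
          rw [hprodeq, hsplit, ha, List.prod_append, List.prod_cons, List.prod_append]
          rw [show l₁.prod * (rf djv hdjv * l₂.prod) * rf δ hδu
            = l₁.prod * (rf djv hdjv * l₂.prod * rf δ hδu) by group, hkey]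
        have hlen2 : (l₁ ++ l₂).length ≤ n := by
          have h1 : (L.concat a).length = L.length + 1 := by simp [List.concat_eq_append]
          have h2 : L.length = l₁.length + l₂.length + 1 := by rw [hsplit]; simp; omega
          have h3 : (l₁ ++ l₂).length = l₁.length + l₂.length := by simp
          omega
        have hmem2 : ∀ h' ∈ l₁ ++ l₂, ∃ δ' ∈ D, ∃ hδ' : ‖δ'‖ = 1, h' = rf δ' hδ' := by
          intro h' hh'
          rcases List.mem_append.1 hh' with h | h
          · exact hmemL h' (by rw [hsplit]; exact List.mem_append_left _ h)
          · exact hmemL h' (by rw [hsplit]; exact List.mem_append_right _ (List.mem_cons_of_mem _ h))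
        have hpos2 : ∀ β ∈ P, 0 < ⟪(l₁ ++ l₂).prod β, q⟫ := by
          intro β hβ
          rw [← hprod2]
          exact hpos β hβ
        rw [hprod2]
        exact ih (l₁ ++ l₂) hlen2 hmem2 hpos2

end Dev

/-- An element of `W` fixing a point not orthogonal to any root is the identity. -/
lemma claimY {W : Subgroup (V ≃ₗᵢ[ℝ] V)} (hfin : (W : Set (V ≃ₗᵢ[ℝ] V)).Finite)
    (hgen : ∃ R : Set (V ≃ₗᵢ[ℝ] V), (∀ g ∈ R, IsOrthoReflection g) ∧ Subgroup.closure R = W)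
    {q : V} (hq : ∀ α ∈ RootSet W, ⟪α, q⟫ ≠ 0)
    {g : V ≃ₗᵢ[ℝ] V} (hg : g ∈ W) (hgq : g q = q) : g = 1 := by
  classical
  -- the positive system
  have hPfin : {α : V | α ∈ RootSet W ∧ 0 < ⟪α, q⟫}.Finite :=
    (rootSet_finite hfin).subset (fun α h => h.1)
  set P : Finset V := hPfin.toFinset with hPdef
  have hP : ∀ α, α ∈ P ↔ α ∈ RootSet W ∧ 0 < ⟪α, q⟫ := by
    intro α; rw [hPdef, Set.Finite.mem_toFinset]; rfl
  -- the simple system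
  have hex : (P.card) ∈ {nn : ℕ | ∃ T : Finset V,
      (T ⊆ P ∧ ∀ β ∈ P, InCone T β) ∧ T.card = nn} :=
    ⟨P, ⟨subset_rfl, fun β hβ => inCone_mem hβ⟩, rfl⟩
  obtain ⟨D, ⟨hD1, hD2⟩, hDcard⟩ := Nat.sInf_mem (Set.nonempty_of_mem hex)
  have hD3 : ∀ β ∈ D, ¬ InCone (D.erase β) β := by
    intro β hβD hcon
    have hsub : D.erase β ⊆ P := (Finset.erase_subset β D).trans hD1
    have hcone : ∀ γ ∈ P, InCone (D.erase β) γ :=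
      fun γ hγ => inCone_subst hβD hcon (hD2 γ hγ)
    have hmemset : (D.erase β).card ∈ {nn : ℕ | ∃ T : Finset V,
        (T ⊆ P ∧ ∀ β ∈ P, InCone T β) ∧ T.card = nn} :=
      ⟨D.erase β, ⟨hsub, hcone⟩, rfl⟩
    have hle := Nat.sInf_le hmemset
    have hcard : (D.erase β).card = D.card - 1 := Finset.card_erase_of_mem hβD
    have hpos : 0 < D.card := Finset.card_pos.2 ⟨β, hβD⟩
    omega
  set S : Set (V ≃ₗᵢ[ℝ] V) := {h | ∃ δ ∈ D, ∃ hδ : ‖δ‖ = 1, h = rf δ hδ} with hSdef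
  -- W is generated by the simple reflections
  have hWS : W ≤ Subgroup.closure S := by
    obtain ⟨R, hRrefl, hRcl⟩ := hgen
    rw [← hRcl]
    apply Subgroup.closure_le _ |>.2
    intro r hr
    have hrW : r ∈ W := hRcl ▸ Subgroup.subset_closure hr
    obtain ⟨α, hα, rfl⟩ := orthoReflection_exists_unit (hRrefl r hr)
    have hαR : α ∈ RootSet W := ⟨hα, hrW⟩
    rcases lt_trichotomy 0 ⟪α, q⟫ with hpos | hzero | hneg
    · have hαP : α ∈ P := (hP α).2 ⟨hαR, hpos⟩
      exact gen_aux hP hq hD1 hD2 hD3 _ α hα hαP le_rfl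
    · exact absurd hzero.symm (hq α hαR)
    · have hnegR : -α ∈ RootSet W := rootSet_neg hαR
      have hnegu : ‖-α‖ = 1 := by rw [norm_neg]; exact hα
      have hnegP : -α ∈ P := (hP _).2 ⟨hnegR, by rw [inner_neg_left]; linarith⟩
      have := gen_aux hP hq hD1 hD2 hD3 _ (-α) hnegu hnegP le_rfl
      rwa [rf_neg hα hnegu] at this
  -- write g as a product of simple reflections
  have hg2 : g ∈ (Subgroup.closure S).toSubmonoid := hWS hg
  rw [Subgroup.closure_toSubmonoid] at hg2
  obtain ⟨l, hlmem, hlprod⟩ := Submonoid.exists_list_of_mem_closure hg2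
  have hlmem' : ∀ h' ∈ l, ∃ δ ∈ D, ∃ hδ : ‖δ‖ = 1, h' = rf δ hδ := by
    intro h' hh'
    rcases hlmem h' hh' with h | h
    · exact h
    · rw [Set.mem_inv] at h
      obtain ⟨δ, hδD, hδu, hinv⟩ := h
      refine ⟨δ, hδD, hδu, ?_⟩
      rw [← inv_inv h', hinv, rf_inv]
  have hpos : ∀ β ∈ P, 0 < ⟪l.prod β, q⟫ := by
    intro β hβ
    rw [hlprod]
    have h1 : ⟪g β, g q⟫ = ⟪β, q⟫ := g.inner_map_map β q
    rw [hgq] at h1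
    rw [h1]
    exact ((hP β).1 hβ).2
  have := prod_eq_one hP hq hD1 hD2 hD3 l.length l le_rfl hlmem' hpos
  rw [← hlprod, this]

lemma exists_common_nonvanishing {M : Type*} [AddCommGroup M] [Module ℝ M]
    {ι : Type*} (s : Finset ι) (f : ι → (M →ₗ[ℝ] ℝ)) (hf : ∀ i ∈ s, ∃ w, f i w ≠ 0) :
    ∃ z : M, ∀ i ∈ s, f i z ≠ 0 := by
  classical
  induction s using Finset.induction_on with
  | empty => exact ⟨0, by simp⟩
  | @insert a s' ha ih =>
    obtain ⟨z, hz⟩ := ih (fun i hi => hf i (Finset.mem_insert_of_mem hi))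
    obtain ⟨w, hw⟩ := hf a (Finset.mem_insert_self a s')
    by_cases hfa : f a z ≠ 0
    · refine ⟨z, fun i hi => ?_⟩
      rcases Finset.mem_insert.1 hi with rfl | hi'
      · exact hfa
      · exact hz i hi'
    · push_neg at hfa
      set bad : Finset ℝ := insert 0 (s'.image fun i => -(f i z) / (f i w)) with hbad
      obtain ⟨t, ht⟩ := Infinite.exists_notMem_finset bad
      have ht0 : t ≠ 0 := fun h => ht (h ▸ Finset.mem_insert_self 0 _)
      refine ⟨z + t • w, fun i hi => ?_⟩
      have hval : f i (z + t • w) = f i z + t * f i w := by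
        rw [map_add, map_smul, smul_eq_mul]
      rcases Finset.mem_insert.1 hi with rfl | hi'
      · rw [hval, hfa, zero_add]
        exact mul_ne_zero ht0 hw
      · rw [hval]
        intro hcon
        by_cases hfw : f i w = 0
        · rw [hfw, mul_zero, add_zero] at hcon
          exact hz i hi' hcon
        · apply ht
          rw [hbad]
          apply Finset.mem_insert_of_mem
          apply Finset.mem_image.2
          refine ⟨i, hi', ?_⟩
          field_simp
          linarith
  
/-- Either `g = 1` or some reflection hyperplane of `W` contains the fixed space of `g`. -/
lemma claimX {W : Subgroup (V ≃ₗᵢ[ℝ] V)} (hfin : (W : Set (V ≃ₗᵢ[ℝ] V)).Finite)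
    (hgen : ∃ R : Set (V ≃ₗᵢ[ℝ] V), (∀ g ∈ R, IsOrthoReflection g) ∧ Subgroup.closure R = W)
    {g : V ≃ₗᵢ[ℝ] V} (hg : g ∈ W) :
    g = 1 ∨ ∃ (α : V) (hα : ‖α‖ = 1), rf α hα ∈ W ∧ ∀ w ∈ fixSpace g, ⟪α, w⟫ = 0 := by
  classical
  by_cases hcase : ∃ α ∈ RootSet W, ∀ w ∈ fixSpace g, ⟪α, w⟫ = 0
  · obtain ⟨α, hαR, hαorth⟩ := hcase
    exact Or.inr ⟨α, rootSet_unit hαR, rootSet_rf_mem hαR _, hαorth⟩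
  · left
    push_neg at hcase
    set f : V → (↥(fixSpace g) →ₗ[ℝ] ℝ) := fun α =>
      { toFun := fun z => ⟪α, (z : V)⟫
        map_add' := by intros; simp [inner_add_right]
        map_smul' := by intros; simp [real_inner_smul_right] } with hf
    obtain ⟨z, hz⟩ := exists_common_nonvanishing (rootSet_finite hfin).toFinset f
      (fun α hα => by
        obtain ⟨w, hw, hwne⟩ := hcase α ((Set.Finite.mem_toFinset _).1 hα)
        exact ⟨⟨w, hw⟩, hwne⟩)
    have hq : ∀ α ∈ RootSet W, ⟪α, (z : V)⟫ ≠ 0 :=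
      fun α hα => hz α ((Set.Finite.mem_toFinset _).2 hα)
    exact claimY hfin hgen hq hg z.2

/-- The main induction. -/
lemma steinberg_aux {W : Subgroup (V ≃ₗᵢ[ℝ] V)} (hfin : (W : Set (V ≃ₗᵢ[ℝ] V)).Finite)
    (hgen : ∃ R : Set (V ≃ₗᵢ[ℝ] V), (∀ g ∈ R, IsOrthoReflection g) ∧ Subgroup.closure R = W)
    (x : V) :
    ∀ (n : ℕ) (g : V ≃ₗᵢ[ℝ] V), g ∈ W → g x = x →
      finrank ℝ V - finrank ℝ (fixSpace g) ≤ n →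
      g ∈ Subgroup.closure {h : V ≃ₗᵢ[ℝ] V | h ∈ W ∧ IsOrthoReflection h ∧ h x = x} := by
  intro n
  induction n with
  | zero =>
    intro g hg hgx hle
    have h1 : finrank ℝ (fixSpace g) ≤ finrank ℝ V := Submodule.finrank_le _
    have h2 : finrank ℝ (fixSpace g) = finrank ℝ V := by omega
    have h3 : fixSpace g = ⊤ := Submodule.eq_top_of_finrank_eq h2
    rw [fixSpace_eq_top_iff.1 h3]
    exact Subgroup.one_mem _
  | succ n ih =>
    intro g hg hgx hle
    by_cases hg1 : g = 1
    · rw [hg1]; exact Subgroup.one_mem _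
    · rcases claimX hfin hgen hg with h | ⟨α, hα, hαW, horth⟩
      · exact absurd h hg1
      · have hxfix : x ∈ fixSpace g := mem_fixSpace.2 hgx
        have hlt := fixSpace_lt_of_orth hα horth
        have hfr : finrank ℝ (fixSpace g) < finrank ℝ (fixSpace (rf α hα * g)) :=
          Submodule.finrank_lt_finrank_of_lt hlt
        have hgx' : (rf α hα * g) x = x := by
          rw [LinearIsometryEquiv.coe_mul, Function.comp_apply, hgx, rf_fix hα (horth x hxfix)]
        have hfr2 : finrank ℝ V - finrank ℝ (fixSpace (rf α hα * g)) ≤ n := by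
          have := Submodule.finrank_le (fixSpace (rf α hα * g))
          omega
        have hmem := ih (rf α hα * g) (W.mul_mem hαW hg) hgx' hfr2
        have hrK : rf α hα ∈ {h : V ≃ₗᵢ[ℝ] V | h ∈ W ∧ IsOrthoReflection h ∧ h x = x} :=
          ⟨hαW, isOrthoReflection_rf hα, rf_fix hα (horth x hxfix)⟩
        have hsplit : g = rf α hα * (rf α hα * g) := by
          rw [← mul_assoc, rf_mul_self, one_mul]
        rw [hsplit]
        exact Subgroup.mul_mem _ (Subgroup.subset_closure hrK) hmem

end SteinbergAux

/-- For a finite group `W` of orthogonal transformations of a finite-dimensional real inner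
product space generated by orthogonal reflections, the stabilizer of a point `x` is generated
by the reflections in `W` fixing `x`. -/
theorem stmt7 {V : Type*} [NormedAddCommGroup V] [InnerProductSpace ℝ V]
    [FiniteDimensional ℝ V]
    (W : Subgroup (V ≃ₗᵢ[ℝ] V)) (hfin : (W : Set (V ≃ₗᵢ[ℝ] V)).Finite)
    (hgen : ∃ R : Set (V ≃ₗᵢ[ℝ] V), (∀ g ∈ R, IsOrthoReflection g) ∧ Subgroup.closure R = W)
    (x : V) (g : V ≃ₗᵢ[ℝ] V) :
    (g ∈ W ∧ g x = x) ↔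
      g ∈ Subgroup.closure {h : V ≃ₗᵢ[ℝ] V | h ∈ W ∧ IsOrthoReflection h ∧ h x = x} := by
  constructor
  · rintro ⟨hg, hgx⟩
    exact SteinbergAux.steinberg_aux hfin hgen x
      (Module.finrank ℝ V - Module.finrank ℝ (SteinbergAux.fixSpace g)) g hg hgx le_rfl
  · intro hmem
    set K : Subgroup (V ≃ₗᵢ[ℝ] V) :=
      { carrier := {h : V ≃ₗᵢ[ℝ] V | h ∈ W ∧ h x = x}
        one_mem' := ⟨Subgroup.one_mem W, by simp⟩
        mul_mem' := by
          rintro a b ⟨haW, hax⟩ ⟨hbW, hbx⟩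
          refine ⟨W.mul_mem haW hbW, ?_⟩
          rw [LinearIsometryEquiv.coe_mul, Function.comp_apply, hbx, hax]
        inv_mem' := by
          rintro a ⟨haW, hax⟩
          refine ⟨W.inv_mem haW, ?_⟩
          calc a⁻¹ x = a⁻¹ (a x) := by rw [hax]
            _ = (a⁻¹ * a) x := by rw [LinearIsometryEquiv.coe_mul]; rfl
            _ = x := by rw [inv_mul_cancel]; simp } with hK
    have hle : Subgroup.closure {h : V ≃ₗᵢ[ℝ] V | h ∈ W ∧ IsOrthoReflection h ∧ h x = x} ≤ K :=
      (Subgroup.closure_le K).2 (fun h hh => ⟨hh.1, hh.2.2⟩)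
    exact hle hmem
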